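/- Let A ⊆ M be compact, f: A → ℝ be 1-Lipschitz, and p ∈ M a point where not all 1-Lipschitz extensions of f agree (i.e., E⁻f(p) < E⁺f(p)). Then there exist a 1-Lipschitz extension F of f to M, a constant η > 0, and a neighbourhood U of p, such that |F(x) − F(y)| ≤ (1 − η)·d(x,y) for all x ∈ A and y ∈ U. -/

import Mathlib

noncomputable def supConv {M : Type*} [MetricSpace M] (A : Set M) (f : M → ℝ) (x : M) : ℝ :=
  ⨆ p : A, (f p - dist (p : M) x)

noncomputable def infConv {M : Type*} [MetricSpace M] (A : Set M) (f : M → ℝ) (x : M) : ℝ :=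
  ⨅ p : A, (f p + dist (p : M) x)

theorem stmt5 {M : Type*} [MetricSpace M] (A : Set M) (hA : A.Nonempty)
    (hAc : IsCompact A)
    (f : M → ℝ) (hf : ∀ p ∈ A, ∀ q ∈ A, |f p - f q| ≤ dist p q)
    (p : M) (hp : supConv A f p < infConv A f p) :
    ∃ (F : M → ℝ) (η : ℝ) (U : Set M), LipschitzWith 1 F ∧ (∀ a ∈ A, F a = f a) ∧
      0 < η ∧ U ∈ nhds p ∧
      ∀ x ∈ A, ∀ y ∈ U, |F x - F y| ≤ (1 - η) * dist x y := by
  obtain ⟨a₀, ha₀⟩ := hA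
  haveI : Nonempty A := ⟨⟨a₀, ha₀⟩⟩
  have bddA : ∀ x : M, BddAbove (Set.range fun q : A => f q - dist (q : M) x) := by
    intro x
    refine ⟨f a₀ + dist a₀ x, ?_⟩
    rintro _ ⟨q, rfl⟩
    have h1 : f q - f a₀ ≤ dist (q : M) a₀ := (abs_le.1 (hf q q.2 a₀ ha₀)).2
    have h2 : dist (q : M) a₀ ≤ dist (q : M) x + dist a₀ x := dist_triangle_right _ _ _
    simp only
    linarith
  have bddB : ∀ x : M, BddBelow (Set.range fun q : A => f q + dist (q : M) x) := by
    intro x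
    refine ⟨f a₀ - dist a₀ x, ?_⟩
    rintro _ ⟨q, rfl⟩
    have h1 : f a₀ - f q ≤ dist a₀ (q : M) := (abs_le.1 (hf a₀ ha₀ q q.2)).2
    have h2 : dist a₀ (q : M) ≤ dist a₀ x + dist (q : M) x := dist_triangle_right _ _ _
    simp only
    linarith
  have hg_ge : ∀ a ∈ A, ∀ x : M, f a - dist a x ≤ supConv A f x := by
    intro a ha x
    exact le_ciSup (bddA x) ⟨a, ha⟩
  have hh_le : ∀ a ∈ A, ∀ x : M, infConv A f x ≤ f a + dist a x := by
    intro a ha x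
    exact ciInf_le (bddB x) ⟨a, ha⟩
  have hgA : ∀ a ∈ A, supConv A f a = f a := by
    intro a ha
    refine le_antisymm (ciSup_le fun q => ?_) ?_
    · have h1 : f q - f a ≤ dist (q : M) a := (abs_le.1 (hf q q.2 a ha)).2
      linarith
    · have := hg_ge a ha a
      simpa using this
  have hhA : ∀ a ∈ A, infConv A f a = f a := by
    intro a ha
    refine le_antisymm ?_ (le_ciInf fun q => ?_)
    · have := hh_le a ha a
      simpa using this
    · have h1 : f a - f q ≤ dist a (q : M) := (abs_le.1 (hf a ha q q.2)).2
      rw [dist_comm] at h1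
      linarith
  have hgL : ∀ x y : M, supConv A f x ≤ supConv A f y + dist x y := by
    intro x y
    refine ciSup_le fun q => ?_
    have h1 : f q - dist (q : M) y ≤ supConv A f y := hg_ge q q.2 y
    have h2 : dist (q : M) y ≤ dist (q : M) x + dist x y := dist_triangle _ _ _
    linarith
  have hhL : ∀ x y : M, infConv A f y - dist x y ≤ infConv A f x := by
    intro x y
    refine le_ciInf fun q => ?_
    have h1 : infConv A f y ≤ f q + dist (q : M) y := hh_le q q.2 y
    have h2 : dist (q : M) y ≤ dist (q : M) x + dist x y := dist_triangle _ _ _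
    linarith
  set g := supConv A f with hg
  set h := infConv A f with hh
  set F : M → ℝ := fun x => (g x + h x) / 2 with hF
  have hFlip : LipschitzWith 1 F := by
    refine LipschitzWith.of_dist_le_mul fun x y => ?_
    rw [Real.dist_eq, NNReal.coe_one, one_mul]
    have h1 := hgL x y
    have h2 := hgL y x
    have h3 := hhL x y
    have h4 := hhL y x
    rw [dist_comm y x] at h2 h4
    rw [abs_le]
    constructor <;> simp only [hF] <;> linarith
  set ε := h p - g p with hε
  have hεpos : 0 < ε := by simp only [hε]; linarith
  obtain ⟨R, hR⟩ := hAc.isBounded.subset_closedBall p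
  set D := max R 0 + ε with hD
  have hDpos : 0 < D := by
    have : (0:ℝ) ≤ max R 0 := le_max_right _ _
    linarith
  set η := ε / (4 * D) with hη
  have hηpos : 0 < η := div_pos hεpos (by linarith)
  refine ⟨F, η, Metric.ball p (ε / 8), hFlip, ?_, hηpos, Metric.ball_mem_nhds p (by linarith), ?_⟩
  · intro a ha
    simp only [hF, hgA a ha, hhA a ha]
    ring
  · intro x hx y hy
    have hdy : dist p y < ε / 8 := by
      rw [dist_comm]; exact Metric.mem_ball.1 hy
    have hdy0 : 0 ≤ dist p y := dist_nonneg
    have hgy : g y ≤ g p + dist y p := hgL y p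
    have hhy : h p - dist y p ≤ h y := hhL y p
    rw [dist_comm y p] at hgy hhy
    have hgap : ε - 2 * dist p y ≤ h y - g y := by linarith
    have h1 : f x - dist x y ≤ g y := hg_ge x hx y
    have h2 : h y ≤ f x + dist x y := hh_le x hx y
    have hdx : dist x p ≤ R := by
      have := hR hx
      simpa [Metric.mem_closedBall] using this
    have hdxy : dist x y ≤ D := by
      have h3 : dist x y ≤ dist x p + dist p y := dist_triangle _ _ _
      have h4 : R ≤ max R 0 := le_max_left _ _
      simp only [hD]
      linarith
    have hFx : F x = f x := by
      simp only [hF, hgA x hx, hhA x hx]; ring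
    have hηd : η * dist x y ≤ ε / 4 := by
      have h5 : η * dist x y ≤ η * D := by
        exact mul_le_mul_of_nonneg_left hdxy (le_of_lt hηpos)
      have h6 : η * D = ε / 4 := by
        field_simp [hη]
        rw [hη, div_mul_eq_mul_div, div_mul_eq_mul_div, div_eq_iff (ne_of_gt (by linarith))]; ring
      exact le_of_le_of_eq h5 h6
    rw [hFx, abs_le]
    constructor <;> simp only [hF] <;> nlinarith [dist_nonneg (x := x) (y := y)]
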